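/- Let 0 < α < β and γ = αβ/(β − α). A nonempty closed convex set C ⊆ E is α-strongly convex and β-smooth if and only if there exists a nonempty closed convex γ-strongly convex set C₀ ⊆ E such that C = C₀ + closedBall(0, 1/β) (Minkowski sum). -/

import Mathlib

open Metric Set
open scoped RealInnerProductSpace Pointwise

noncomputable section

variable {F : Type*} [NormedAddCommGroup F] [InnerProductSpace ℝ F]

/-- The normal cone of a set `C` at a point `z`. -/
def normalCone (C : Set F) (z : F) : Set F :=
  {v | ∀ x ∈ C, ⟪v, x - z⟫ ≤ 0}

/-- A set `C` is `β`-smooth if at every boundary point `z`, every unit normal vector `n`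
gives a closed ball of radius `1/β` centered at `z - (1/β) n` contained in `C`. -/
def IsSmoothSet (β : ℝ) (C : Set F) : Prop :=
  ∀ z ∈ frontier C, ∀ n ∈ normalCone C z, ‖n‖ = 1 →
    closedBall (z - (1 / β) • n) (1 / β) ⊆ C

/-- A set `C` is `α`-strongly convex if at every boundary point `z`, every unit normal
vector `n` gives a closed ball of radius `1/α` centered at `z - (1/α) n` containing `C`. -/
def IsStronglyConvexSet (α : ℝ) (C : Set F) : Prop :=
  ∀ z ∈ frontier C, ∀ n ∈ normalCone C z, ‖n‖ = 1 →
    C ⊆ closedBall (z - (1 / α) • n) (1 / α)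

/-- `diam C ≤ D`, expressed pointwise. -/
def DiamLE (C : Set F) (D : ℝ) : Prop :=
  ∀ x ∈ C, ∀ y ∈ C, ‖x - y‖ ≤ D

/-- The `δ`-interior of a set: points whose closed `δ`-ball lies inside the set. -/
def deltaInterior (δ : ℝ) (C : Set F) : Set F :=
  {x | closedBall x δ ⊆ C}

/-- The set `C` interpolates the data: `z i ∈ C` with normal vector `v i`, and
`x k` lies in the `δ k`-interior of `C`. -/
def InterpolatedBy {ι κ : Type*} (C : Set F) (z v : ι → F) (x : κ → F) (δ : κ → ℝ) : Prop :=
  (∀ i, z i ∈ C ∧ v i ∈ normalCone C (z i)) ∧ ∀ k, x k ∈ deltaInterior (δ k) C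

/-- The interpolation conditions `Interp(α, β, D; λ)`, with `n i = v i / ‖v i‖`,
`r = 1/α - 1/β` and `s k = max 0 (δ k - 1/β)`. -/
def InterpCond {ι κ : Type*} (α β D lam : ℝ) (z v : ι → F) (x : κ → F) (δ : κ → ℝ) : Prop :=
  ∃ w : κ → F,
    (∀ i j, ‖z i - (1 / α) • (‖v i‖⁻¹ • v i) - (z j - (1 / β) • (‖v j‖⁻¹ • v j))‖ ≤
      1 / α - 1 / β) ∧
    (∀ i k, ‖z i - (1 / α) • (‖v i‖⁻¹ • v i) - w k‖ ≤
      (1 / α - 1 / β) - max 0 (δ k - 1 / β)) ∧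
    (∀ k, ‖x k - w k‖ ≤ 1 / β - δ k + max 0 (δ k - 1 / β)) ∧
    (∀ i j, ‖z i - (1 / β) • (‖v i‖⁻¹ • v i) - (z j - (1 / β) • (‖v j‖⁻¹ • v j))‖ ≤
      lam * (D - 2 / β)) ∧
    (∀ i k, ‖z i - (1 / β) • (‖v i‖⁻¹ • v i) - w k‖ ≤
      lam * (D - 2 / β) - max 0 (δ k - 1 / β)) ∧
    (∀ k l, ‖w k - w l‖ ≤ lam * (D - 2 / β) - max 0 (δ k - 1 / β) - max 0 (δ l - 1 / β))

open Filter
open scoped Topology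

set_option linter.unusedSectionVars false
set_option linter.unusedVariables false

lemma norm_inv_smul_unit {v : F} (hv : v ≠ 0) : ‖‖v‖⁻¹ • v‖ = 1 := by
  rw [norm_smul, norm_inv, norm_norm, inv_mul_cancel₀ (norm_ne_zero_iff.mpr hv)]

lemma smul_mem_normalCone {C : Set F} {z v : F} (hv : v ∈ normalCone C z) {c : ℝ} (hc : 0 ≤ c) :
    c • v ∈ normalCone C z := fun x hx => by
  rw [real_inner_smul_left]
  exact mul_nonpos_iff.mpr (Or.inl ⟨hc, hv x hx⟩)

lemma mem_frontier_of_normalCone {C : Set F} {z v : F} (hz : z ∈ C)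
    (hv : v ∈ normalCone C z) (hv0 : v ≠ 0) : z ∈ frontier C := by
  rw [frontier_eq_closure_inter_closure]
  refine ⟨subset_closure hz, ?_⟩
  rw [Metric.mem_closure_iff]
  intro ε hε
  have hvn : (0:ℝ) < ‖v‖ := norm_pos_iff.mpr hv0
  have ht : (0:ℝ) < ε / (2 * ‖v‖) := by positivity
  refine ⟨z + (ε / (2 * ‖v‖)) • v, ?_, ?_⟩
  · intro hmem
    have h2 := hv _ hmem
    rw [add_sub_cancel_left, real_inner_smul_right, real_inner_self_eq_norm_sq] at h2
    nlinarith [mul_pos ht (pow_pos hvn 2)]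
  · rw [dist_comm, dist_eq_norm, add_sub_cancel_left, norm_smul, Real.norm_of_nonneg ht.le]
    have heq : ε / (2 * ‖v‖) * ‖v‖ = ε / 2 := by field_simp
    rw [heq]; linarith

lemma exists_proj_normal [CompleteSpace F] {C : Set F} (hne : C.Nonempty) (hcl : IsClosed C)
    (hcv : Convex ℝ C) {p : F} (hp : p ∉ C) :
    ∃ q ∈ C, p - q ∈ normalCone C q ∧ p ≠ q := by
  obtain ⟨q, hqC, hq⟩ := exists_norm_eq_iInf_of_complete_convex hne hcl.isComplete hcv p
  rw [norm_eq_iInf_iff_real_inner_le_zero hcv hqC] at hq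
  exact ⟨q, hqC, fun x hx => hq x hx, fun h => hp (h ▸ hqC)⟩

lemma exists_unit_normal_of_frontier [CompleteSpace F] {C : Set F} (hcv : Convex ℝ C)
    (hint : (interior C).Nonempty) {z : F} (hz : z ∈ frontier C) :
    ∃ n, ‖n‖ = 1 ∧ n ∈ normalCone C z := by
  obtain ⟨w, hw⟩ := hint
  have hzi : z ∉ interior C := hz.2
  obtain ⟨f, hf⟩ := geometric_hahn_banach_open_point hcv.interior isOpen_interior hzi
  have hfle : ∀ x ∈ C, f x ≤ f z := by
    intro x hx
    have key : ∀ t ∈ Ioo (0:ℝ) 1, t * f w + (1 - t) * f x ≤ f z := by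
      intro t ht
      have hmem : t • w + (1 - t) • x ∈ interior C :=
        hcv.combo_interior_closure_mem_interior hw (subset_closure hx) ht.1
          (by linarith [ht.2]) (by ring)
      have := hf _ hmem
      rw [map_add, map_smul, map_smul] at this
      simpa using this.le
    have htend : Tendsto (fun t : ℝ => t * f w + (1 - t) * f x) (𝓝[>] 0) (𝓝 (f x)) := by
      have : Tendsto (fun t : ℝ => t * f w + (1 - t) * f x) (𝓝 0) (𝓝 (0 * f w + (1 - 0) * f x)) := by
        exact (continuous_id.mul continuous_const).add
          ((continuous_const.sub continuous_id).mul continuous_const) |>.tendsto 0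
      simpa using this.mono_left nhdsWithin_le_nhds
    refine le_of_tendsto htend ?_
    filter_upwards [Ioo_mem_nhdsGT_of_mem (by norm_num : (0:ℝ) ∈ Ico (0:ℝ) 1)] with t ht
    exact key t ht
  set v := (InnerProductSpace.toDual ℝ F).symm f with hv
  have hvx : ∀ x, ⟪v, x⟫ = f x := fun x => InnerProductSpace.toDual_symm_apply
  have hv0 : v ≠ 0 := by
    intro h
    have : f w < f z := hf w hw
    have hfz : f = 0 := by
      have := congrArg (InnerProductSpace.toDual ℝ F) h
      simpa [hv] using this
    rw [hfz] at this; simp at this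
  refine ⟨‖v‖⁻¹ • v, norm_inv_smul_unit hv0, ?_⟩
  intro x hx
  rw [real_inner_smul_left, inner_sub_right, hvx, hvx]
  have := hfle x hx
  have h1 : (0:ℝ) ≤ ‖v‖⁻¹ := by positivity
  exact mul_nonpos_iff.mpr (Or.inl ⟨h1, by linarith⟩)

lemma isClosed_deltaInterior {C : Set F} (hcl : IsClosed C) (δ : ℝ) :
    IsClosed (deltaInterior δ C) := by
  have heq : deltaInterior δ C = ⋂ b ∈ closedBall (0:F) δ, (· + b) ⁻¹' C := by
    ext x
    simp only [deltaInterior, mem_setOf_eq, mem_iInter, mem_preimage, mem_closedBall,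
      dist_zero_right, subset_def, dist_eq_norm]
    constructor
    · intro h b hb; exact h (x + b) (by simpa using hb)
    · intro h y hy; simpa using h (y - x) (by simpa [norm_sub_rev] using hy)
  rw [heq]
  exact isClosed_biInter fun b _ => hcl.preimage (continuous_add_right b)

lemma convex_deltaInterior {C : Set F} (hcv : Convex ℝ C) (δ : ℝ) :
    Convex ℝ (deltaInterior δ C) := by
  intro x hx y hy a b ha hb hab p hp
  rw [mem_closedBall, dist_eq_norm] at hp
  set u := p - (a • x + b • y) with hu
  have h1 : x + u ∈ C := hx (by simp [mem_closedBall, dist_eq_norm, hu]; simpa [hu] using hp)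
  have h2 : y + u ∈ C := hy (by simp [mem_closedBall, dist_eq_norm, hu]; simpa [hu] using hp)
  have heq : a • (x + u) + b • (y + u) = p := by
    have h3 : a • (x + u) + b • (y + u) = (a • x + b • y) + (a + b) • u := by module
    rw [h3, hab, one_smul, hu, add_sub_cancel]
  rw [← heq]
  exact hcv h1 h2 ha hb hab

lemma key_backward_mem {C C₀ : Set F} {β : ℝ} (hβ : 0 < β)
    (hC : C = C₀ + closedBall 0 (1/β)) {z n : F} (hzC : z ∈ C)
    (hn : n ∈ normalCone C z) (hn1 : ‖n‖ = 1) : z - (1/β) • n ∈ C₀ := by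
  have hβ' : (0:ℝ) ≤ 1/β := by positivity
  obtain ⟨y, hy, b, hb, hz⟩ : ∃ y ∈ C₀, ∃ b ∈ closedBall (0:F) (1/β), y + b = z := by
    rw [hC] at hzC; exact mem_add.mp hzC
  have hbn : ‖b‖ ≤ 1/β := by simpa [mem_closedBall, dist_zero_right] using hb
  have hyn : y + (1/β) • n ∈ C := by
    rw [hC]
    exact mem_add.mpr ⟨y, hy, (1/β) • n,
      by simp [mem_closedBall, dist_zero_right, norm_smul, hn1, abs_of_pos hβ], rfl⟩
  have h1 := hn _ hyn
  have hcomp : y + (1/β) • n - z = (1/β) • n - b := by rw [← hz]; abel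
  rw [hcomp, inner_sub_right, real_inner_smul_right, real_inner_self_eq_norm_sq, hn1] at h1
  have h2 : ⟪n, b⟫ ≤ ‖n‖ * ‖b‖ := real_inner_le_norm n b
  rw [hn1, one_mul] at h2
  have hb2 : ‖b‖ = 1/β := le_antisymm hbn (by nlinarith)
  have h3 : ⟪n, b⟫ = ‖n‖ * ‖b‖ := by rw [hn1, one_mul, hb2]; nlinarith
  have h4 := inner_eq_norm_mul_iff_real.mp h3
  rw [hn1, one_smul, hb2] at h4
  have : b = (1/β) • n := h4.symm
  rw [← hz, this, add_sub_cancel_right]; exact hy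

lemma backward_smooth {C C₀ : Set F} {β : ℝ} (hβ : 0 < β) (hcl : IsClosed C)
    (hC : C = C₀ + closedBall 0 (1/β)) : IsSmoothSet β C := by
  intro z hz n hn hn1
  have hzC : z ∈ C := hcl.frontier_subset hz
  have hy := key_backward_mem hβ hC hzC hn hn1
  intro w hw
  rw [mem_closedBall, dist_eq_norm] at hw
  rw [hC]
  exact mem_add.mpr ⟨z - (1/β) • n, hy, w - (z - (1/β) • n),
    by simpa [mem_closedBall, dist_zero_right] using hw, by abel⟩

lemma backward_strong {C C₀ : Set F} {α β : ℝ} (hα : 0 < α) (hαβ : α < β) (hcl : IsClosed C)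
    (h0cl : IsClosed C₀) (h0sc : IsStronglyConvexSet (α * β / (β - α)) C₀)
    (hC : C = C₀ + closedBall 0 (1/β)) : IsStronglyConvexSet α C := by
  have hβ : 0 < β := hα.trans hαβ
  have hγ : 1 / (α * β / (β - α)) = 1/α - 1/β := by
    rw [one_div_div]; field_simp
  intro z hz n hn hn1
  have hzC : z ∈ C := hcl.frontier_subset hz
  have hy := key_backward_mem hβ hC hzC hn hn1
  set y := z - (1/β) • n with hydef
  have hnC₀ : n ∈ normalCone C₀ y := by
    intro x hx
    have hxC : x + (1/β) • n ∈ C := by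
      rw [hC]
      exact mem_add.mpr ⟨x, hx, (1/β) • n,
        by simp [mem_closedBall, dist_zero_right, norm_smul, hn1, abs_of_pos hβ], rfl⟩
    have := hn _ hxC
    have hcomp : x + (1/β) • n - z = x - y := by rw [hydef]; abel
    rwa [hcomp] at this
  have hyfr : y ∈ frontier C₀ :=
    mem_frontier_of_normalCone hy hnC₀ (by intro h; rw [h] at hn1; simp at hn1)
  have hsub := h0sc y hyfr n hnC₀ hn1
  rw [hγ] at hsub
  intro c hc
  rw [hC] at hc
  obtain ⟨x, hx, b, hb, hcb⟩ := mem_add.mp hc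
  have h1 : ‖x - (y - (1/α - 1/β) • n)‖ ≤ 1/α - 1/β := by
    have := hsub hx; rwa [mem_closedBall, dist_eq_norm] at this
  have h2 : ‖b‖ ≤ 1/β := by simpa [mem_closedBall, dist_zero_right] using hb
  rw [mem_closedBall, dist_eq_norm]
  have hcent : z - (1/α) • n = (y - (1/α - 1/β) • n) := by
    rw [hydef]; module
  rw [← hcb, hcent]
  calc ‖x + b - (y - (1/α - 1/β) • n)‖ ≤ ‖x - (y - (1/α - 1/β) • n)‖ + ‖b‖ := by
        rw [show x + b - (y - (1/α - 1/β) • n) = (x - (y - (1/α - 1/β) • n)) + b by abel]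
        exact norm_add_le _ _
    _ ≤ (1/α - 1/β) + 1/β := add_le_add h1 h2
    _ = 1/α := by ring

lemma forward_eq [ProperSpace F] [CompleteSpace F] {C : Set F} {β : ℝ} (hβ : 0 < β)
    (hcl : IsClosed C) (hcv : Convex ℝ C) (hint : (interior C).Nonempty)
    (hsm : IsSmoothSet β C) : C = deltaInterior (1/β) C + closedBall 0 (1/β) := by
  have hβ' : (0:ℝ) < 1/β := by positivity
  apply Subset.antisymm
  · intro x hx
    by_cases hx0 : x ∈ deltaInterior (1/β) C
    · exact mem_add.mpr ⟨x, hx0, 0, by simp [mem_closedBall]; positivity, add_zero x⟩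
    obtain ⟨p, hp1, hp2⟩ := not_subset.mp hx0
    have hcne : Cᶜ.Nonempty := ⟨p, hp2⟩
    obtain ⟨q, hqcl, hqd⟩ :=
      isClosed_closure.exists_infDist_eq_dist (hcne.mono subset_closure) x
    rw [infDist_closure] at hqd
    set r := dist x q with hr
    have hr_le : r ≤ 1/β := by
      rw [← hqd]
      exact le_trans (infDist_le_dist_of_mem hp2) (by rwa [dist_comm, ← mem_closedBall])
    have hr0 : (0:ℝ) ≤ r := dist_nonneg
    have hqC : q ∈ C := by
      by_contra hqn
      have hxq : x ≠ q := fun h => hqn (h ▸ hx)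
      have hrpos : 0 < r := by
        rw [hr, dist_pos]; exact hxq
      obtain ⟨ε, hε, hball⟩ := Metric.isOpen_iff.mp hcl.isOpen_compl q hqn
      set t := min (ε/2) (r/2) with htdef
      have ht0 : 0 < t := lt_min (by positivity) (by positivity)
      set q' := q + (t/r) • (x - q) with hq'
      have hq'mem : q' ∈ Cᶜ := by
        apply hball
        rw [mem_ball, hq', dist_comm, dist_eq_norm]
        have : q - (q + (t/r) • (x - q)) = -((t/r) • (x - q)) := by abel
        rw [this, norm_neg, norm_smul, Real.norm_of_nonneg (by positivity)]
        have hxqn : ‖x - q‖ = r := by rw [hr, dist_eq_norm]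
        rw [hxqn, div_mul_cancel₀ _ hrpos.ne']
        exact lt_of_le_of_lt (min_le_left _ _) (by linarith)
      have hclose : dist x q' < r := by
        rw [hq', dist_eq_norm]
        have : x - (q + (t/r) • (x - q)) = (1 - t/r) • (x - q) := by module
        rw [this, norm_smul]
        have htr : t/r ≤ 1/2 := by
          rw [div_le_div_iff₀ hrpos (by norm_num)]
          have := min_le_right (ε/2) (r/2); linarith [this]
        have h1 : (0:ℝ) ≤ 1 - t/r := by linarith
        rw [Real.norm_of_nonneg h1]
        have hxqn : ‖x - q‖ = r := by rw [hr, dist_eq_norm]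
        rw [hxqn]
        have htr0 : 0 < t/r := by positivity
        nlinarith
      have : infDist x Cᶜ ≤ dist x q' := infDist_le_dist_of_mem hq'mem
      rw [hqd] at this; linarith
    have hqfr : q ∈ frontier C := by
      rw [frontier_eq_closure_inter_closure]
      exact ⟨subset_closure hqC, hqcl⟩
    rcases eq_or_lt_of_le hr0 with hr0' | hrpos
    · -- r = 0 : x = q ∈ frontier C
      have hxq : x = q := by rw [← dist_eq_zero, ← hr, ← hr0']
      obtain ⟨n, hn1, hn⟩ := exists_unit_normal_of_frontier hcv hint (hxq ▸ hqfr)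
      have hy : x - (1/β) • n ∈ deltaInterior (1/β) C :=
        hsm x (hxq ▸ hqfr) n hn hn1
      refine mem_add.mpr ⟨x - (1/β) • n, hy, (1/β) • n, ?_, by abel⟩
      simp [mem_closedBall, dist_zero_right, norm_smul, hn1, abs_of_pos hβ]
    · -- r > 0
      obtain ⟨n, hn1, hn⟩ := exists_unit_normal_of_frontier hcv hint hqfr
      have hinC : ∀ t : ℝ, 0 < t → t < r → x + t • n ∈ C := by
        intro t ht0 htr
        by_contra hnot
        have : infDist x Cᶜ ≤ dist x (x + t • n) := infDist_le_dist_of_mem hnot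
        rw [hqd, dist_eq_norm] at this
        have : r ≤ ‖x - (x + t • n)‖ := this
        rw [show x - (x + t • n) = -(t • n) by abel, norm_neg, norm_smul, hn1, mul_one,
          Real.norm_of_nonneg ht0.le] at this
        linarith
      have hs_le : ∀ t : ℝ, 0 < t → t < r → ⟪n, x - q⟫ ≤ -t := by
        intro t ht0 htr
        have := hn _ (hinC t ht0 htr)
        rw [show x + t • n - q = (x - q) + t • n by abel, inner_add_right,
          real_inner_smul_right, real_inner_self_eq_norm_sq, hn1] at this
        nlinarith
      have hs : ⟪n, x - q⟫ ≤ -r := by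
        by_contra hcon
        push_neg at hcon
        have h1 := hs_le (r/2) (by linarith) (by linarith)
        have hns : 0 < -⟪n, x - q⟫ := by linarith
        have h2 := hs_le ((-⟪n, x - q⟫ + r)/2) (by linarith) (by linarith)
        linarith
      have hcs : |⟪n, x - q⟫| ≤ r := by
        have := abs_real_inner_le_norm n (x - q)
        rwa [hn1, one_mul, show ‖x - q‖ = r by rw [hr, dist_eq_norm]] at this
      have hseq : ⟪n, x - q⟫ = -r := le_antisymm hs (by cases abs_le.mp hcs; linarith)
      have heqn : ⟪n, q - x⟫ = ‖n‖ * ‖q - x‖ := by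
        rw [hn1, one_mul, show ‖q - x‖ = r by rw [hr, dist_comm, dist_eq_norm],
          show q - x = -(x - q) by abel, inner_neg_right, hseq, neg_neg]
      have h4 := inner_eq_norm_mul_iff_real.mp heqn
      rw [hn1, one_smul, show ‖q - x‖ = r by rw [hr, dist_comm, dist_eq_norm]] at h4
      -- h4 : r • n = q - x
      have hy : q - (1/β) • n ∈ deltaInterior (1/β) C := hsm q hqfr n hn hn1
      refine mem_add.mpr ⟨q - (1/β) • n, hy, x - (q - (1/β) • n), ?_, by abel⟩
      rw [mem_closedBall, dist_zero_right,
        show x - (q - (1/β) • n) = -(q - x) + (1/β) • n by abel, ← h4,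
        show -(r • n) + (1/β) • n = (1/β - r) • n by module,
        norm_smul, hn1, mul_one, Real.norm_of_nonneg (by linarith)]
      linarith
  · intro c hc
    obtain ⟨y, hy, b, hb, hcb⟩ := mem_add.mp hc
    rw [← hcb]
    exact hy (by simpa [mem_closedBall, dist_eq_norm] using hb)

lemma forward_strong {C : Set F} {α β : ℝ} (hα : 0 < α) (hαβ : α < β)
    (hcl : IsClosed C) (hsc : IsStronglyConvexSet α C)
    (hC : C = deltaInterior (1/β) C + closedBall 0 (1/β)) :
    IsStronglyConvexSet (α * β / (β - α)) (deltaInterior (1/β) C) := by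
  have hβ : 0 < β := hα.trans hαβ
  have hγ : 1 / (α * β / (β - α)) = 1/α - 1/β := by rw [one_div_div]; field_simp
  intro z₀ hz₀ n hn hn1
  have hz₀C₀ : z₀ ∈ deltaInterior (1/β) C :=
    (isClosed_deltaInterior hcl _).frontier_subset hz₀
  set z := z₀ + (1/β) • n with hzdef
  have hnz : n ∈ normalCone C z := by
    intro c hc
    rw [hC] at hc
    obtain ⟨y, hy, b, hb, hcb⟩ := mem_add.mp hc
    have h1 : ⟪n, y - z₀⟫ ≤ 0 := hn y hy
    have h2 : ⟪n, b⟫ ≤ ‖b‖ := by have := real_inner_le_norm n b; rwa [hn1, one_mul] at this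
    have h3 : ‖b‖ ≤ 1/β := by simpa [mem_closedBall, dist_zero_right] using hb
    have hre : c - z = (y - z₀) + (b - (1/β) • n) := by rw [← hcb, hzdef]; abel
    rw [inner_sub_right] at h1
    rw [hre]
    simp only [inner_add_right, inner_sub_right, real_inner_smul_right]
    rw [real_inner_self_eq_norm_sq, hn1]
    nlinarith
  have hzC : z ∈ C := by
    rw [hC]
    exact mem_add.mpr ⟨z₀, hz₀C₀, (1/β) • n,
      by simp [mem_closedBall, dist_zero_right, norm_smul, hn1, abs_of_pos hβ], rfl⟩
  have hzfr : z ∈ frontier C :=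
    mem_frontier_of_normalCone hzC hnz (by intro h; rw [h] at hn1; simp at hn1)
  have hsub := hsc z hzfr n hnz hn1
  rw [hγ]
  intro x hx
  set c := z - (1/α) • n with hcdef
  have hcent : z₀ - (1/α - 1/β) • n = c := by rw [hcdef, hzdef]; module
  rw [mem_closedBall, dist_eq_norm, hcent]
  have hαβ' : (0:ℝ) < 1/α - 1/β := by
    rw [sub_pos, div_lt_div_iff₀ hβ hα]; linarith
  by_cases hxc : x = c
  · rw [hxc, sub_self, norm_zero]; linarith
  · have hxc0 : x - c ≠ 0 := sub_ne_zero.mpr hxc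
    have hxcn : 0 < ‖x - c‖ := norm_pos_iff.mpr hxc0
    have hu1 : ‖‖x - c‖⁻¹ • (x - c)‖ = 1 := norm_inv_smul_unit hxc0
    have hxu : x + (1/β) • (‖x - c‖⁻¹ • (x - c)) ∈ C := by
      rw [hC]
      exact mem_add.mpr ⟨x, hx, (1/β) • (‖x - c‖⁻¹ • (x - c)),
        by simp [mem_closedBall, dist_zero_right, norm_smul, hu1,
          abs_of_pos hβ, inv_mul_cancel₀ hxcn.ne'], rfl⟩
    have hin := hsub hxu
    rw [mem_closedBall, dist_eq_norm] at hin
    have hre : x + (1/β) • (‖x - c‖⁻¹ • (x - c)) - c =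
        (1 + (1/β) * ‖x - c‖⁻¹) • (x - c) := by module
    rw [hre, norm_smul, Real.norm_of_nonneg (by positivity)] at hin
    have hexp : (1 + (1/β) * ‖x - c‖⁻¹) * ‖x - c‖ = ‖x - c‖ + 1/β := by
      field_simp
    rw [hexp] at hin
    linarith


/-- main theorem -/
theorem stronglyConvex_and_smooth_iff_minkowski {d : ℕ} (hd : 1 ≤ d) (α β : ℝ)
    (hα : 0 < α) (hαβ : α < β) (C : Set (EuclideanSpace ℝ (Fin d))) (hne : C.Nonempty)
    (hcl : IsClosed C) (hcv : Convex ℝ C) :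
    (IsStronglyConvexSet α C ∧ IsSmoothSet β C) ↔
      ∃ C₀ : Set (EuclideanSpace ℝ (Fin d)), C₀.Nonempty ∧ IsClosed C₀ ∧ Convex ℝ C₀ ∧
        IsStronglyConvexSet (α * β / (β - α)) C₀ ∧ C = C₀ + closedBall 0 (1 / β) := by
  have hβ : 0 < β := hα.trans hαβ
  have hβ' : (0:ℝ) < 1/β := by positivity
  constructor
  · rintro ⟨hsc, hsm⟩
    by_cases hfr : frontier C = ∅
    · have huniv : C = univ := (isClopen_iff_frontier_eq_empty.mpr hfr).eq_univ hne
      refine ⟨univ, univ_nonempty, isClosed_univ, convex_univ, ?_, ?_⟩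
      · intro z hz; rw [frontier_univ] at hz; exact absurd hz (notMem_empty z)
      · rw [huniv]
        apply Subset.antisymm
        · intro x _
          exact mem_add.mpr ⟨x, mem_univ x, 0,
            by simp [mem_closedBall]; positivity, add_zero x⟩
        · exact subset_univ _
    · obtain ⟨zf, hzf⟩ := nonempty_iff_ne_empty.mpr hfr
      have hint : (interior C).Nonempty := by
        by_contra hint
        rw [not_nonempty_iff_eq_empty] at hint
        have hspan : affineSpan ℝ C ≠ ⊤ := by
          intro h
          rw [← hcv.interior_nonempty_iff_affineSpan_eq_top] at h
          rw [hint] at h; exact h.ne_empty rfl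
        have hdir : (affineSpan ℝ C).direction ≠ ⊤ := by
          intro h
          exact hspan ((AffineSubspace.direction_eq_top_iff_of_nonempty
            ((affineSpan_nonempty (k := ℝ)).mpr hne)).mp h)
        have horth : ((affineSpan ℝ C).direction)ᗮ ≠ ⊥ := by
          intro h
          exact hdir (Submodule.orthogonal_eq_bot_iff.mp h)
        obtain ⟨v, hv, hv0⟩ := Submodule.exists_mem_ne_zero_of_ne_bot horth
        have hzC : zf ∈ C := hcl.frontier_subset hzf
        have hn1 : ‖‖v‖⁻¹ • v‖ = 1 := norm_inv_smul_unit hv0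
        have hnc : ‖v‖⁻¹ • v ∈ normalCone C zf := by
          intro x hx
          have hmem : x - zf ∈ (affineSpan ℝ C).direction := by
            have := AffineSubspace.vsub_mem_direction
              (subset_affineSpan ℝ C hx) (subset_affineSpan ℝ C hzC)
            simpa using this
          have h0 : ⟪v, x - zf⟫ = 0 := by
            rw [real_inner_comm]
            exact (Submodule.mem_orthogonal _ v).mp hv _ hmem
          rw [real_inner_smul_left, h0, mul_zero]
        have hball := hsm zf hzf _ hnc hn1
        have : zf - (1/β) • (‖v‖⁻¹ • v) ∈ interior C :=
          interior_maximal (le_trans ball_subset_closedBall hball) isOpen_ball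
            (mem_ball_self hβ')
        rw [hint] at this; exact this
      have hCeq := forward_eq hβ hcl hcv hint hsm
      obtain ⟨n, hn1, hn⟩ := exists_unit_normal_of_frontier hcv hint hzf
      refine ⟨deltaInterior (1/β) C, ⟨zf - (1/β) • n, hsm zf hzf n hn hn1⟩,
        isClosed_deltaInterior hcl _, convex_deltaInterior hcv _,
        forward_strong hα hαβ hcl hsc hCeq, hCeq⟩
  · rintro ⟨C₀, h0ne, h0cl, h0cv, h0sc, hC⟩
    exact ⟨backward_strong hα hαβ hcl h0cl h0sc hC, backward_smooth hβ hcl hC⟩
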